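/- Let n ≥ 1, d ≥ 1, k₁, k₂ ≥ 2, and let m₁,…,m_d be nonnegative integers with ∑ᵢ mᵢ = n(k₁k₂ − 1). Then there exist nonnegative integers mᵢʲ for i = 1,…,d and j = 0,1,…,k₁ such that: ∑_{i=1}^d mᵢ⁰ = n(k₁ − 1); ∑_{i=1}^d mᵢʲ = n(k₂ − 1) for each j = 1,…,k₁; and ∑_{j=0}^{k₁} mᵢʲ = mᵢ for each i = 1,…,d. -/
import Mathlib

/-- If `s ≤ ∑ t`, there is `r ≤ t` pointwise with `∑ r = s`. -/
lemma necklace_aux_split : ∀ (K : ℕ) (t : Fin K → ℕ) (s : ℕ), s ≤ ∑ j, t j →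
    ∃ r : Fin K → ℕ, (∀ j, r j ≤ t j) ∧ ∑ j, r j = s := by
  intro K
  induction K with
  | zero =>
    intro t s hs
    simp at hs
    exact ⟨fun j => 0, fun j => Nat.zero_le _, by simp [hs]⟩
  | succ K ih =>
    intro t s hs
    rw [Fin.sum_univ_succ] at hs
    obtain ⟨r', hr'le, hr'sum⟩ := ih (fun j => t j.succ) (s - min (t 0) s)
      (by show s - min (t 0) s ≤ ∑ j : Fin K, t j.succ; omega)
    refine ⟨Fin.cons (min (t 0) s) r', ?_, ?_⟩
    · intro j
      refine Fin.cases ?_ ?_ j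
      · simp
      · intro j'; simpa using hr'le j'
    · rw [Fin.sum_univ_succ]
      simp only [Fin.cons_zero, Fin.cons_succ]
      omega

/-- Any vector with sum equal to `∑ t` can be arranged into a matrix with
prescribed column sums `t` and row sums `m`. -/
lemma necklace_aux_matrix : ∀ (d : ℕ) (K : ℕ) (m : Fin d → ℕ) (t : Fin K → ℕ),
    ∑ i, m i = ∑ j, t j →
    ∃ a : Fin d → Fin K → ℕ,
      (∀ j, ∑ i, a i j = t j) ∧ (∀ i, ∑ j, a i j = m i) := by
  intro d
  induction d with
  | zero =>
    intro K m t h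
    simp at h
    refine ⟨fun i => Fin.elim0 i, fun j => ?_, fun i => Fin.elim0 i⟩
    simp [(Finset.sum_eq_zero_iff.mp h.symm j (Finset.mem_univ j)).symm]
  | succ d ih =>
    intro K m t h
    rw [Fin.sum_univ_succ] at h
    obtain ⟨r, hrle, hrsum⟩ := necklace_aux_split K t (m 0) (by omega)
    have hd : ∑ j, (t j - r j) = ∑ j, t j - ∑ j, r j := by
      rw [Finset.sum_tsub_distrib]
      intro j _; exact hrle j
    obtain ⟨a', hacol, harow⟩ := ih K (fun i => m i.succ) (fun j => t j - r j)
      (by show ∑ i : Fin d, m i.succ = ∑ j : Fin K, (t j - r j); omega)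
    refine ⟨Fin.cons r a', ?_, ?_⟩
    · intro j
      rw [Fin.sum_univ_succ]
      simp only [Fin.cons_zero, Fin.cons_succ]
      have := hacol j
      have := hrle j
      omega
    · intro i
      refine Fin.cases ?_ ?_ i
      · simp [hrsum]
      · intro i'; simpa using harow i'

theorem necklace_arithmetic_lemma (n d k₁ k₂ : ℕ) (hn : 1 ≤ n) (hd : 1 ≤ d)
    (h₁ : 2 ≤ k₁) (h₂ : 2 ≤ k₂) (m : Fin d → ℕ)
    (hm : ∑ i, m i = n * (k₁ * k₂ - 1)) :
    ∃ m' : Fin d → Fin (k₁ + 1) → ℕ,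
      (∑ i, m' i 0 = n * (k₁ - 1)) ∧
      (∀ j : Fin (k₁ + 1), j ≠ 0 → ∑ i, m' i j = n * (k₂ - 1)) ∧
      (∀ i, ∑ j, m' i j = m i) := by
  set t : Fin (k₁ + 1) → ℕ := Fin.cons (n * (k₁ - 1)) (fun _ => n * (k₂ - 1)) with ht
  have hsum : ∑ j, t j = n * (k₁ * k₂ - 1) := by
    rw [ht, Fin.sum_cons]
    simp only [Finset.sum_const, Finset.card_univ, Fintype.card_fin, smul_eq_mul]
    obtain ⟨a, rfl⟩ : ∃ a, k₁ = a + 2 := ⟨k₁ - 2, by omega⟩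
    obtain ⟨b, rfl⟩ : ∃ b, k₂ = b + 2 := ⟨k₂ - 2, by omega⟩
    have e : (a + 2) * (b + 2) - 1 = a * b + 2 * a + 2 * b + 3 := by
      have : (a + 2) * (b + 2) = (a * b + 2 * a + 2 * b + 3) + 1 := by ring
      omega
    rw [e]
    have e2 : (a + 2) - 1 = a + 1 := by omega
    have e3 : (b + 2) - 1 = b + 1 := by omega
    rw [e2, e3]; ring
  obtain ⟨a, hacol, harow⟩ := necklace_aux_matrix d (k₁ + 1) m t (by rw [hm, hsum])
  refine ⟨a, ?_, ?_, harow⟩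
  · have := hacol 0
    simpa [ht] using this
  · intro j hj
    obtain ⟨j', rfl⟩ := Fin.eq_succ_of_ne_zero hj
    have := hacol (Fin.succ j')
    simpa [ht] using this
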